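/- Let f be continuously differentiable on a neighborhood of x₀, and for each W > 0 let w_W : ℝ → ℝ be nonnegative on (0,W], zero outside (0,W], with ∫₀^W w_W(t) dt = 1. Then the limit as W → 0⁺ of (∫₀^W f(x₀+t)·w_W(t) dt − ∫₀^W f(x₀−t)·w_W(t) dt) / (2·∫₀^W t·w_W(t) dt) exists and equals f'(x₀). -/

import Mathlib

open MeasureTheory intervalIntegral Filter

theorem tao_derivative_eq_deriv
    (f : ℝ → ℝ) (x₀ : ℝ) (hf : ContDiffAt ℝ 1 f x₀)
    (w : ℝ → ℝ → ℝ)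
    (hnonneg : ∀ W > (0:ℝ), ∀ t ∈ Set.Ioc (0:ℝ) W, 0 ≤ w W t)
    (hzero : ∀ W > (0:ℝ), ∀ t ∉ Set.Ioc (0:ℝ) W, w W t = 0)
    (hnorm : ∀ W > (0:ℝ), (∫ t in (0:ℝ)..W, w W t) = 1) :
    Tendsto
      (fun W : ℝ =>
        ((∫ t in (0:ℝ)..W, f (x₀ + t) * w W t) -
          ∫ t in (0:ℝ)..W, f (x₀ - t) * w W t) /
        (2 * ∫ t in (0:ℝ)..W, t * w W t))
      (nhdsWithin 0 (Set.Ioi 0)) (nhds (deriv f x₀)) := by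
  classical
  -- get an open set where f is C¹
  obtain ⟨u, hu_open, hxu, hfu⟩ := hf.contDiffOn' le_rfl (by simp)
  rw [Set.insert_eq_of_mem (Set.mem_univ x₀), Set.univ_inter] at hfu
  obtain ⟨r, hr, hball⟩ := Metric.isOpen_iff.1 hu_open x₀ hxu
  have hfr : ContDiffOn ℝ 1 f (Metric.ball x₀ r) := hfu.mono hball
  have hderiv : ∀ x ∈ Metric.ball x₀ r, HasDerivAt f (deriv f x) x := by
    intro x hx
    exact ((hfr.differentiableOn one_ne_zero).differentiableAt
      (Metric.isOpen_ball.mem_nhds hx)).hasDerivAt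
  have hderiv_cont : ContinuousOn (deriv f) (Metric.ball x₀ r) :=
    hfr.continuousOn_deriv_of_isOpen Metric.isOpen_ball le_rfl
  have hf_cont : ContinuousOn f (Metric.ball x₀ r) := hfr.continuousOn
  set d := deriv f x₀ with hd
  rw [Metric.tendsto_nhdsWithin_nhds]
  intro ε hε
  -- choose δ for continuity of deriv f
  have hcx : ContinuousWithinAt (deriv f) (Metric.ball x₀ r) x₀ :=
    hderiv_cont x₀ (Metric.mem_ball_self hr)
  rw [Metric.continuousWithinAt_iff] at hcx
  obtain ⟨δ₀, hδ₀, hδ₀c⟩ := hcx (ε/2) (by linarith)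
  set δ : ℝ := min (δ₀/2) (r/2) with hδdef
  have hδpos : 0 < δ := by positivity
  have hδr : δ < r := by
    have : δ ≤ r/2 := min_le_right _ _
    linarith
  have hδδ₀ : δ < δ₀ := by
    have : δ ≤ δ₀/2 := min_le_left _ _
    linarith
  -- key pointwise bound via MVT
  have key : ∀ t ∈ Set.Ioc (0:ℝ) δ, |f (x₀ + t) - f (x₀ - t) - 2*t*d| ≤ ε/2 * (2*t) := by
    intro t ht
    obtain ⟨ht0, htδ⟩ := ht
    set s : Set ℝ := Set.Icc (x₀ - t) (x₀ + t) with hs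
    have hsub : s ⊆ Metric.ball x₀ r := by
      intro x hx
      rw [Metric.mem_ball, Real.dist_eq, abs_lt]
      constructor <;> [nlinarith [hx.1]; nlinarith [hx.2]]
    have hg : ∀ x ∈ s, HasDerivWithinAt (fun y => f y - d * y) (deriv f x - d) s x := by
      intro x hx
      have h := ((hderiv x (hsub hx)).sub ((hasDerivAt_id x).const_mul d)).hasDerivWithinAt (s := s)
      simp only [mul_one, id_eq] at h
      exact h
    have hbd : ∀ x ∈ s, ‖deriv f x - d‖ ≤ ε/2 := by
      intro x hx
      have hxb := hsub hx
      rcases eq_or_ne x x₀ with rfl | hne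
      · simp [hd]; positivity
      · have : dist x x₀ < δ₀ := by
          have hxb' := hxb
          rw [Metric.mem_ball, Real.dist_eq] at hxb'
          rw [Real.dist_eq]
          have h1 : |x - x₀| ≤ t := abs_le.2 ⟨by linarith [hx.1], by linarith [hx.2]⟩
          linarith
        have := hδ₀c hxb this
        rw [Real.dist_eq] at this
        exact le_of_lt this
    have hmvt := Convex.norm_image_sub_le_of_norm_hasDerivWithin_le hg hbd
      (convex_Icc _ _) (Set.left_mem_Icc.2 (by linarith)) (Set.right_mem_Icc.2 (by linarith))
    have h2t : ‖(x₀ + t) - (x₀ - t)‖ = 2*t := by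
      rw [Real.norm_eq_abs]
      rw [abs_of_nonneg (by linarith)]
      ring
    rw [h2t] at hmvt
    calc |f (x₀ + t) - f (x₀ - t) - 2*t*d|
        = ‖(f (x₀+t) - d*(x₀+t)) - (f (x₀-t) - d*(x₀-t))‖ := by
          rw [Real.norm_eq_abs]; ring_nf
      _ ≤ ε/2 * (2*t) := hmvt
  refine ⟨δ, hδpos, ?_⟩
  intro W hW hWd
  rw [Real.dist_eq, sub_zero, abs_of_pos hW] at hWd
  have hW' : (0:ℝ) < W := hW
  have hWδ : W ≤ δ := le_of_lt hWd
  have hWle : (0:ℝ) ≤ W := le_of_lt hW'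
  -- integrability of w
  have hw_int : IntervalIntegrable (w W) volume 0 W := by
    by_contra h
    have hn := hnorm W hW'
    rw [intervalIntegral.integral_undef h] at hn
    exact zero_ne_one hn
  have hw_on : IntegrableOn (w W) (Set.Ioc 0 W) volume :=
    (intervalIntegrable_iff_integrableOn_Ioc_of_le hWle).1 hw_int
  have hw_ae_nonneg : 0 ≤ᵐ[volume.restrict (Set.Ioc (0:ℝ) W)] w W := by
    filter_upwards [ae_restrict_mem measurableSet_Ioc] with t ht
    exact hnonneg W hW' t ht
  -- integrability of products
  have hm_plus : AEStronglyMeasurable (fun t => f (x₀ + t)) (volume.restrict (Set.Ioc (0:ℝ) W)) := by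
    refine ContinuousOn.aestronglyMeasurable ?_ measurableSet_Ioc
    refine hf_cont.comp (continuous_const.add continuous_id).continuousOn ?_
    intro t ht
    rw [Set.mem_Ioc] at ht
    rw [Metric.mem_ball, Real.dist_eq]
    have : |x₀ + t - x₀| = t := by rw [add_sub_cancel_left, abs_of_pos ht.1]
    rw [this]; linarith
  have hm_minus : AEStronglyMeasurable (fun t => f (x₀ - t)) (volume.restrict (Set.Ioc (0:ℝ) W)) := by
    refine ContinuousOn.aestronglyMeasurable ?_ measurableSet_Ioc
    refine hf_cont.comp (continuous_const.sub continuous_id).continuousOn ?_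
    intro t ht
    rw [Set.mem_Ioc] at ht
    rw [Metric.mem_ball, Real.dist_eq]
    have : |x₀ - t - x₀| = t := by
      rw [show x₀ - t - x₀ = -t by ring, abs_neg, abs_of_pos ht.1]
    rw [this]; linarith
  -- bound for f on closed ball
  obtain ⟨C, hC⟩ := (isCompact_Icc (a := x₀ - δ) (b := x₀ + δ)).exists_bound_of_continuousOn
    (hf_cont.mono (fun x hx => by
      rw [Metric.mem_ball, Real.dist_eq, abs_lt]
      constructor <;> [nlinarith [hx.1]; nlinarith [hx.2]]))
  have hint_plus : IntervalIntegrable (fun t => f (x₀ + t) * w W t) volume 0 W := by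
    rw [intervalIntegrable_iff_integrableOn_Ioc_of_le hWle]
    refine hw_on.bdd_mul (c := C) hm_plus ?_
    filter_upwards [ae_restrict_mem measurableSet_Ioc] with t ht
    exact hC _ ⟨by linarith [ht.1], by linarith [ht.2, hWδ]⟩
  have hint_minus : IntervalIntegrable (fun t => f (x₀ - t) * w W t) volume 0 W := by
    rw [intervalIntegrable_iff_integrableOn_Ioc_of_le hWle]
    refine hw_on.bdd_mul (c := C) hm_minus ?_
    filter_upwards [ae_restrict_mem measurableSet_Ioc] with t ht
    exact hC _ ⟨by linarith [ht.1, ht.2, hWδ], by linarith [ht.1, hδpos]⟩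
  have hint_t : IntervalIntegrable (fun t => t * w W t) volume 0 W := by
    rw [intervalIntegrable_iff_integrableOn_Ioc_of_le hWle]
    refine hw_on.bdd_mul (c := W) (aestronglyMeasurable_id) ?_
    filter_upwards [ae_restrict_mem measurableSet_Ioc] with t ht
    rw [Real.norm_eq_abs, abs_of_pos ht.1]
    exact ht.2
  -- positivity of the denominator
  set D : ℝ := ∫ t in (0:ℝ)..W, t * w W t with hD
  have hD_nonneg : 0 ≤ D := by
    rw [hD, intervalIntegral.integral_of_le hWle]
    refine setIntegral_nonneg measurableSet_Ioc ?_
    intro t ht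
    exact mul_nonneg (le_of_lt ht.1) (hnonneg W hW' t ht)
  have hD_pos : 0 < D := by
    rcases hD_nonneg.lt_or_eq with h | h
    · exact h
    · exfalso
      have hDint : IntegrableOn (fun t => t * w W t) (Set.Ioc (0:ℝ) W) volume :=
        (intervalIntegrable_iff_integrableOn_Ioc_of_le hWle).1 hint_t
      have h0 : (∫ t in Set.Ioc (0:ℝ) W, t * w W t) = 0 := by
        rw [← intervalIntegral.integral_of_le hWle, ← hD, ← h]
      have hae : (fun t => t * w W t) =ᵐ[volume.restrict (Set.Ioc (0:ℝ) W)] 0 := by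
        refine (integral_eq_zero_iff_of_nonneg_ae ?_ hDint).1 h0
        filter_upwards [ae_restrict_mem measurableSet_Ioc] with t ht
        exact mul_nonneg (le_of_lt ht.1) (hnonneg W hW' t ht)
      have hwae : w W =ᵐ[volume.restrict (Set.Ioc (0:ℝ) W)] 0 := by
        filter_upwards [hae, ae_restrict_mem measurableSet_Ioc] with t ht hmem
        have ht' : t * w W t = 0 := ht
        have : t ≠ 0 := ne_of_gt hmem.1
        exact (mul_eq_zero.1 ht').resolve_left this
      have : (∫ t in (0:ℝ)..W, w W t) = 0 := by
        rw [intervalIntegral.integral_of_le hWle]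
        rw [integral_congr_ae hwae]
        simp
      rw [hnorm W hW'] at this
      exact one_ne_zero this
  -- combined integrand
  have hint_g : IntervalIntegrable
      (fun t => (f (x₀ + t) - f (x₀ - t) - 2*t*d) * w W t) volume 0 W := by
    have h1 : IntervalIntegrable (fun t => 2*d*(t * w W t)) volume 0 W := hint_t.const_mul _
    have := (hint_plus.sub hint_minus).sub h1
    refine this.congr ?_
    intro t _
    simp only [Pi.sub_apply]
    ring
  -- numerator identity
  have hnum : ((∫ t in (0:ℝ)..W, f (x₀ + t) * w W t) - ∫ t in (0:ℝ)..W, f (x₀ - t) * w W t)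
      - d * (2 * D) = ∫ t in (0:ℝ)..W, (f (x₀ + t) - f (x₀ - t) - 2*t*d) * w W t := by
    have e1 : (∫ t in (0:ℝ)..W, (f (x₀ + t) - f (x₀ - t) - 2*t*d) * w W t)
        = (∫ t in (0:ℝ)..W, (f (x₀ + t) * w W t - f (x₀ - t) * w W t) - 2*d*(t * w W t)) := by
      apply intervalIntegral.integral_congr
      intro t _
      ring
    rw [e1, intervalIntegral.integral_sub (hint_plus.sub hint_minus) (hint_t.const_mul _),
      intervalIntegral.integral_sub hint_plus hint_minus,
      intervalIntegral.integral_const_mul]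
    rw [← hD]
    ring
  -- bound the numerator
  have hbound : |∫ t in (0:ℝ)..W, (f (x₀ + t) - f (x₀ - t) - 2*t*d) * w W t| ≤ ε/2 * (2*D) := by
    calc |∫ t in (0:ℝ)..W, (f (x₀ + t) - f (x₀ - t) - 2*t*d) * w W t|
        ≤ ∫ t in (0:ℝ)..W, |(f (x₀ + t) - f (x₀ - t) - 2*t*d) * w W t| :=
          intervalIntegral.abs_integral_le_integral_abs hWle
      _ ≤ ∫ t in (0:ℝ)..W, ε * (t * w W t) := by
          refine intervalIntegral.integral_mono_on hWle hint_g.abs (hint_t.const_mul ε) ?_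
          intro t ht
          rcases eq_or_lt_of_le ht.1 with h0 | h0
          · have : w W t = 0 := hzero W hW' t (by
              rw [← h0]; simp)
            simp [this]
          · have htIoc : t ∈ Set.Ioc (0:ℝ) W := ⟨h0, ht.2⟩
            have hwt := hnonneg W hW' t htIoc
            rw [abs_mul, abs_of_nonneg hwt]
            have hk := key t ⟨h0, le_trans ht.2 hWδ⟩
            calc |f (x₀ + t) - f (x₀ - t) - 2*t*d| * w W t
                ≤ (ε/2 * (2*t)) * w W t := mul_le_mul_of_nonneg_right hk hwt
              _ = ε * (t * w W t) := by ring
      _ = ε * D := by rw [intervalIntegral.integral_const_mul, ← hD]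
      _ = ε/2 * (2*D) := by ring
  -- conclude
  have h2D : (0:ℝ) < 2*D := by linarith
  rw [Real.dist_eq]
  have : ((∫ t in (0:ℝ)..W, f (x₀ + t) * w W t) - ∫ t in (0:ℝ)..W, f (x₀ - t) * w W t)
      / (2*D) - d = (((∫ t in (0:ℝ)..W, f (x₀ + t) * w W t)
        - ∫ t in (0:ℝ)..W, f (x₀ - t) * w W t) - d * (2*D)) / (2*D) := by
    field_simp
  rw [this, hnum, abs_div, abs_of_pos h2D, div_lt_iff₀ h2D]
  calc |∫ t in (0:ℝ)..W, (f (x₀ + t) - f (x₀ - t) - 2*t*d) * w W t|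
      ≤ ε/2 * (2*D) := hbound
    _ < ε * (2*D) := by nlinarith
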